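/- Let t(r) = r + O(r³) near 0 (precisely, |t(r) - r| ≤ Cr³ for r ≤ 1), and for y₀, κ > 0 set λ = √(κ/y₀). Then for r ∈ (0,1], the rescaled coefficient x_{y₀}(λr) = y₀t(λr)²/(1 + 2y₀∫₀^{λr} t) satisfies |x_{y₀}(λr) - κr²/(1+κr²)| ≤ C'κ²/y₀ for some constant C' independent of κ, y₀ (for y₀ large). In particular x_{y₀}(λ·) converges uniformly on (0,1] to the basic ASD instanton profile κr²/(1+κr²) as y₀ → ∞. -/

import Mathlib

open Set

lemma spin7_aux_div (X K D : ℝ) (hD : 1 ≤ D) (hK : 0 ≤ K) :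
    |X / D - K / (1 + K)| ≤ |X - K| + |D - 1 - K| := by
  have hD0 : (0 : ℝ) < D := lt_of_lt_of_le one_pos hD
  have hK1 : (0 : ℝ) < 1 + K := by linarith
  rw [div_sub_div _ _ hD0.ne' hK1.ne', abs_div, abs_of_pos (mul_pos hD0 hK1),
    div_le_iff₀ (mul_pos hD0 hK1)]
  have hnum : X * (1 + K) - D * K = (X - K) * (1 + K) - K * (D - 1 - K) := by ring
  rw [hnum]
  calc |(X - K) * (1 + K) - K * (D - 1 - K)|
      ≤ |X - K| * (1 + K) + K * |D - 1 - K| := by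
        refine (abs_sub _ _).trans (le_of_eq ?_)
        rw [abs_mul, abs_mul, abs_of_pos hK1, abs_of_nonneg hK]
    _ ≤ (|X - K| + |D - 1 - K|) * (D * (1 + K)) := by
        nlinarith [abs_nonneg (X - K), abs_nonneg (D - 1 - K),
          mul_nonneg (mul_nonneg (add_nonneg (abs_nonneg (X - K)) (abs_nonneg (D - 1 - K)))
            (sub_nonneg.2 hD)) hK1.le]

theorem spin7_bubbling_asd (t : ℝ → ℝ) (C : ℝ)
    (htc : ContinuousOn t (Ici 0)) (htn : ∀ r ≥ 0, 0 ≤ t r)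
    (happ : ∀ r ∈ Ioc (0 : ℝ) 1, |t r - r| ≤ C * r ^ 3) :
    ∃ C' > (0 : ℝ), ∀ κ > (0 : ℝ), ∀ y₀ ≥ max κ 1, ∀ r ∈ Ioc (0 : ℝ) 1,
      |y₀ * t (Real.sqrt (κ / y₀) * r) ^ 2 /
          (1 + 2 * y₀ * ∫ s in (0 : ℝ)..(Real.sqrt (κ / y₀) * r), t s) -
        κ * r ^ 2 / (1 + κ * r ^ 2)| ≤ C' * κ ^ 2 / y₀ := by
  have hC : 0 ≤ C := by
    have h := happ 1 ⟨one_pos, le_refl 1⟩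
    have := abs_nonneg (t 1 - 1)
    nlinarith
  refine ⟨C ^ 2 + 3 * C + 1, by positivity, ?_⟩
  intro κ hκ y₀ hy₀ r hr
  have hy1 : (1 : ℝ) ≤ y₀ := le_trans (le_max_right _ _) hy₀
  have hyκ : κ ≤ y₀ := le_trans (le_max_left _ _) hy₀
  have hy0 : (0 : ℝ) < y₀ := lt_of_lt_of_le one_pos hy1
  set l := Real.sqrt (κ / y₀) with hl
  have hl2 : l ^ 2 = κ / y₀ := Real.sq_sqrt (by positivity)
  have hl0 : 0 < l := Real.sqrt_pos.2 (by positivity)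
  have hl1 : l ≤ 1 := Real.sqrt_le_one.2 (by rw [div_le_one hy0]; exact hyκ)
  obtain ⟨hr0, hr1⟩ := hr
  set a := l * r with ha
  have ha0 : 0 < a := mul_pos hl0 hr0
  have ha1 : a ≤ 1 := mul_le_one₀ hl1 hr0.le hr1
  set N := t a with hN
  set I := (∫ s in (0:ℝ)..a, t s) with hI
  -- key scaling identity
  have hscale : y₀ * a ^ 2 = κ * r ^ 2 := by
    have : a ^ 2 = (κ / y₀) * r ^ 2 := by rw [ha, mul_pow, hl2]
    rw [this]; field_simp
  have hM : y₀ * a ^ 4 ≤ κ ^ 2 / y₀ := by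
    have h4 : a ^ 4 = (κ / y₀) ^ 2 * r ^ 4 := by
      have : a ^ 4 = (a ^ 2) ^ 2 := by ring
      rw [this, ha, mul_pow, hl2]; ring
    rw [h4]
    have hr4 : r ^ 4 ≤ 1 := pow_le_one₀ hr0.le hr1
    have : y₀ * ((κ / y₀) ^ 2 * r ^ 4) ≤ y₀ * ((κ / y₀) ^ 2 * 1) := by
      apply mul_le_mul_of_nonneg_left _ hy0.le
      apply mul_le_mul_of_nonneg_left hr4 (by positivity)
    calc y₀ * ((κ / y₀) ^ 2 * r ^ 4) ≤ y₀ * ((κ / y₀) ^ 2 * 1) := this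
      _ = κ ^ 2 / y₀ := by field_simp
  -- pointwise bound at a
  have hNa : |N - a| ≤ C * a ^ 3 := happ a ⟨ha0, ha1⟩
  have hN0 : 0 ≤ N := htn a ha0.le
  have ha3 : a ^ 3 ≤ a := by
    calc a ^ 3 ≤ a ^ 1 := pow_le_pow_of_le_one ha0.le ha1 (by norm_num)
      _ = a := pow_one a
  -- numerator bound
  have hNsum : N + a ≤ (C + 2) * a := by
    have h2 := (abs_le.1 hNa).2
    nlinarith
  have habs : |N ^ 2 - a ^ 2| ≤ C * (C + 2) * a ^ 4 := by
    have h1 : N ^ 2 - a ^ 2 = (N - a) * (N + a) := by ring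
    rw [h1, abs_mul, abs_of_nonneg (show (0:ℝ) ≤ N + a by linarith)]
    calc |N - a| * (N + a) ≤ (C * a ^ 3) * ((C + 2) * a) :=
          mul_le_mul hNa hNsum (by linarith) (by positivity)
      _ = C * (C + 2) * a ^ 4 := by ring
  have hA : |y₀ * N ^ 2 - κ * r ^ 2| ≤ C * (C + 2) * (y₀ * a ^ 4) := by
    rw [← hscale]
    have h1 : y₀ * N ^ 2 - y₀ * a ^ 2 = y₀ * (N ^ 2 - a ^ 2) := by ring
    rw [h1, abs_mul, abs_of_pos hy0]
    calc y₀ * |N ^ 2 - a ^ 2| ≤ y₀ * (C * (C + 2) * a ^ 4) :=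
          mul_le_mul_of_nonneg_left habs hy0.le
      _ = C * (C + 2) * (y₀ * a ^ 4) := by ring
  -- integral bound
  have hti : IntervalIntegrable t MeasureTheory.volume 0 a := by
    apply ContinuousOn.intervalIntegrable
    apply htc.mono
    rw [uIcc_of_le ha0.le]
    exact Icc_subset_Ici_self
  have hInn : 0 ≤ I := intervalIntegral.integral_nonneg ha0.le (fun s hs => htn s hs.1)
  have hIdiff : |I - a ^ 2 / 2| ≤ C * a ^ 4 / 4 := by
    have hsub : I - a ^ 2 / 2 = ∫ s in (0:ℝ)..a, (t s - s) := by
      rw [intervalIntegral.integral_sub hti (continuous_id'.intervalIntegrable 0 a),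
        integral_id]
      ring
    have hbound : ‖∫ s in (0:ℝ)..a, (t s - s)‖ ≤ |∫ s in (0:ℝ)..a, C * s ^ 3| := by
      apply intervalIntegral.norm_integral_le_abs_of_norm_le
      · have hmem := MeasureTheory.ae_restrict_mem (μ := MeasureTheory.volume) (measurableSet_uIoc (a := (0:ℝ)) (b := a))
        filter_upwards [hmem] with s hs
        rw [uIoc_of_le ha0.le] at hs
        exact happ s ⟨hs.1, le_trans hs.2 ha1⟩
      · exact (continuous_const.mul (continuous_pow 3)).intervalIntegrable 0 a
    have hval : (∫ s in (0:ℝ)..a, C * s ^ 3) = C * a ^ 4 / 4 := by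
      rw [intervalIntegral.integral_const_mul, integral_pow]
      norm_num
      ring
    rw [hsub]
    calc |∫ s in (0:ℝ)..a, (t s - s)| ≤ |∫ s in (0:ℝ)..a, C * s ^ 3| := hbound
      _ = C * a ^ 4 / 4 := by rw [hval, abs_of_nonneg (by positivity)]
  have hE : |2 * y₀ * I - κ * r ^ 2| ≤ C * (y₀ * a ^ 4) / 2 := by
    rw [← hscale]
    have h1 : 2 * y₀ * I - y₀ * a ^ 2 = 2 * y₀ * (I - a ^ 2 / 2) := by ring
    rw [h1, abs_mul, abs_of_nonneg (by positivity : (0:ℝ) ≤ 2 * y₀)]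
    calc 2 * y₀ * |I - a ^ 2 / 2| ≤ 2 * y₀ * (C * a ^ 4 / 4) :=
          mul_le_mul_of_nonneg_left hIdiff (by positivity)
      _ = C * (y₀ * a ^ 4) / 2 := by ring
  clear_value l a N I
  -- denominators
  have hD1 : (1 : ℝ) ≤ 1 + 2 * y₀ * I := by nlinarith
  have hK0 : (0 : ℝ) ≤ κ * r ^ 2 := by positivity
  have key := spin7_aux_div (y₀ * N ^ 2) (κ * r ^ 2) (1 + 2 * y₀ * I) hD1 hK0
  have hdd : (1 : ℝ) + 2 * y₀ * I - 1 - κ * r ^ 2 = 2 * y₀ * I - κ * r ^ 2 := by ring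
  rw [hdd] at key
  have hfin : |y₀ * N ^ 2 - κ * r ^ 2| + |2 * y₀ * I - κ * r ^ 2| ≤
      (C ^ 2 + 3 * C + 1) * κ ^ 2 / y₀ := by
    have hz : 0 ≤ y₀ * a ^ 4 := by positivity
    have hsum := add_le_add hA hE
    have h1 : C * (C + 2) * (y₀ * a ^ 4) + C * (y₀ * a ^ 4) / 2 ≤
        (C ^ 2 + 3 * C + 1) * (κ ^ 2 / y₀) := by nlinarith
    calc |y₀ * N ^ 2 - κ * r ^ 2| + |2 * y₀ * I - κ * r ^ 2|
        ≤ C * (C + 2) * (y₀ * a ^ 4) + C * (y₀ * a ^ 4) / 2 := hsum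
      _ ≤ (C ^ 2 + 3 * C + 1) * (κ ^ 2 / y₀) := h1
      _ = (C ^ 2 + 3 * C + 1) * κ ^ 2 / y₀ := by ring
  exact le_trans key hfin
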